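/- Let F be the cdf of a Borel probability measure on ℝ with ε := F(0) > 0, conditional negative-tail second moment bound E[X² | Χ ≤ 0] ≤ K, and suppose y* > 0 satisfies y* ≤ D for a constant D. Then the quantity R = E[X²·1_{X≤0}] + y*·E[|X|·1_{X≤0}] satisfies R ≤ (K + D√K)·ε. Furthermore, if F satisfies the concentration bound F(x+t) − F(x) ≤ M·t for all x ≥ 0 and t > 0, and q := F(y*) − F(0), then the quantity L = ∫_{(0,y*]} x(y* − x) dF(x) satisfies L ≥ q³/(27 M²). -/

import Mathlib

open MeasureTheory Set

/-- **Lemmas: upper bound on `R` and lower bound on `L`.**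
Let `μ` be a Borel probability measure on `ℝ` with cdf `F`, `ε = F(0) > 0` and
conditional negative-tail second moment bound `E[X² | X ≤ 0] ≤ K`, and let
`0 < y* ≤ D`.  Then `R = E[X²·1_{X≤0}] + y*·E[|X|·1_{X≤0}] ≤ (K + D√K)·ε`.
Furthermore, if `F(x+t) − F(x) ≤ M·t` for all `x ≥ 0`, `t > 0`, and
`q = F(y*) − F(0)`, then `L = ∫_{(0,y*]} x(y* − x) dμ ≥ q³/(27M²)`. -/
theorem R_upper_bound_and_L_lower_bound (μ : Measure ℝ) [IsProbabilityMeasure μ]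
    (F : ℝ → ℝ) (hF : ∀ y, F y = (μ (Set.Iic y)).toReal)
    (hmom2 : IntegrableOn (fun x : ℝ => x ^ 2) (Set.Iic 0) μ)
    (hε : 0 < F 0)
    (K : ℝ) (hK : ∫ x in Set.Iic 0, x ^ 2 ∂μ ≤ K * F 0)
    (ystar : ℝ) (hy : 0 < ystar)
    (D : ℝ) (hD : ystar ≤ D)
    (M : ℝ) (hconc : ∀ x t : ℝ, 0 ≤ x → 0 < t → F (x + t) - F x ≤ M * t) :
    (∫ x in Set.Iic 0, x ^ 2 ∂μ) + ystar * (∫ x in Set.Iic 0, |x| ∂μ)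
      ≤ (K + D * Real.sqrt K) * F 0
    ∧ (F ystar - F 0) ^ 3 / (27 * M ^ 2)
      ≤ ∫ x in Set.Ioc 0 ystar, x * (ystar - x) ∂μ := by
  have hne : ∀ s : Set ℝ, μ s ≠ ⊤ := fun s => measure_ne_top μ s
  -- monotone F and Ioc formula
  have hFmono : ∀ a b : ℝ, a ≤ b → F a ≤ F b := by
    intro a b hab
    rw [hF a, hF b]
    exact ENNReal.toReal_mono (hne _) (measure_mono (Iic_subset_Iic.2 hab))
  have hIocF : ∀ a b : ℝ, a ≤ b → (μ (Ioc a b)).toReal = F b - F a := by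
    intro a b hab
    have hsplit : μ (Iic b) = μ (Iic a) + μ (Ioc a b) := by
      rw [← measure_union (Iic_disjoint_Ioc le_rfl) measurableSet_Ioc,
        Iic_union_Ioc_eq_Iic hab]
    rw [hF a, hF b, hsplit, ENNReal.toReal_add (hne _) (hne _)]
    ring
  constructor
  · -- Part 1
    set I2 := ∫ x in Set.Iic 0, x ^ 2 ∂μ with hI2
    set I1 := ∫ x in Set.Iic 0, |x| ∂μ with hI1def
    have habs_int : IntegrableOn (fun x : ℝ => |x|) (Set.Iic 0) μ := by
      have hconst : IntegrableOn (fun _ : ℝ => (1 : ℝ)) (Set.Iic 0) μ :=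
        (integrable_const _).integrableOn
      have hsum : IntegrableOn (fun x : ℝ => (x ^ 2 + 1) / 2) (Set.Iic 0) μ := by
        apply Integrable.div_const
        exact hmom2.add hconst
      refine Integrable.mono hsum (measurable_abs).aestronglyMeasurable ?_
      filter_upwards with x
      have h1 : |x| ≤ (x ^ 2 + 1) / 2 := by nlinarith [sq_nonneg (|x| - 1), sq_abs x]
      have h2 : 0 ≤ (x ^ 2 + 1) / 2 := by positivity
      simpa [abs_of_nonneg (show (0:ℝ) ≤ x ^ 2 + 1 by positivity), abs_abs] using h1
    have hI2nonneg : 0 ≤ I2 :=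
      setIntegral_nonneg measurableSet_Iic (fun x _ => sq_nonneg x)
    have hK0 : 0 ≤ K := by nlinarith
    have hI1nonneg : 0 ≤ I1 :=
      setIntegral_nonneg measurableSet_Iic (fun x _ => abs_nonneg x)
    have hI1 : I1 ≤ Real.sqrt K * F 0 := by
      rcases eq_or_lt_of_le hI1nonneg with h0 | hpos
      · rw [← h0]; positivity
      · -- AM-GM with a := I1 / F 0
        have hεμ : (0:ℝ) < (μ (Set.Iic 0)).toReal := by rwa [← hF 0]
        set a : ℝ := I1 / F 0 with ha
        have hapos : 0 < a := div_pos hpos hε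
        have hpt : ∀ x : ℝ, |x| ≤ x ^ 2 / (2 * a) + a / 2 := by
          intro x
          have hb : 2 * a * |x| ≤ x ^ 2 + a ^ 2 := by
            nlinarith [sq_nonneg (|x| - a), sq_abs x]
          have hdiv : |x| ≤ (x ^ 2 + a ^ 2) / (2 * a) :=
            (le_div_iff₀ (by positivity)).2 (by nlinarith)
          have heq : (x ^ 2 + a ^ 2) / (2 * a) = x ^ 2 / (2 * a) + a / 2 := by
            field_simp
          linarith [heq ▸ hdiv]
        have hint_rhs : IntegrableOn (fun x : ℝ => x ^ 2 / (2 * a) + a / 2)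
            (Set.Iic 0) μ :=
          (hmom2.div_const _).add ((integrable_const _).integrableOn)
        have hmono : I1 ≤ ∫ x in Set.Iic 0, (x ^ 2 / (2 * a) + a / 2) ∂μ := by
          refine setIntegral_mono habs_int hint_rhs fun x => hpt x
        have hcalc : ∫ x in Set.Iic 0, (x ^ 2 / (2 * a) + a / 2) ∂μ
            = I2 / (2 * a) + (a / 2) * F 0 := by
          rw [integral_add (hmom2.div_const _) ((integrable_const _).integrableOn),
            integral_div, integral_const]
          simp only [Measure.real, Measure.restrict_apply_univ, smul_eq_mul]
          rw [hF 0, ← hI2]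
          ring
        have key : I1 ≤ I2 / (2 * a) + (a / 2) * F 0 := hcalc ▸ hmono
        -- substitute a = I1 / F 0 : I1 ≤ I2 * F 0 / (2 I1) + I1/2 ⇒ I1² ≤ I2 F 0 ≤ K F0²
        have hsq : I1 ^ 2 ≤ I2 * F 0 := by
          have hid : a / 2 * F 0 = I1 / 2 := by
            rw [ha]; field_simp
          have h1 : I1 / 2 ≤ I2 / (2 * a) := by linarith
          have h3 : I1 / 2 * (2 * a) ≤ I2 := (le_div_iff₀ (by positivity)).1 h1
          have h4 : I1 / 2 * (2 * a) = I1 ^ 2 / F 0 := by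
            rw [ha]; field_simp
          rw [h4] at h3
          exact (div_le_iff₀ hε).1 h3
        have hsq2 : I1 ^ 2 ≤ K * F 0 ^ 2 := by nlinarith
        have : I1 ≤ Real.sqrt (K * F 0 ^ 2) := by
          rw [← Real.sqrt_sq hI1nonneg]
          exact Real.sqrt_le_sqrt (by nlinarith)
        rwa [Real.sqrt_mul hK0, Real.sqrt_sq hε.le] at this
    have : ystar * I1 ≤ D * (Real.sqrt K * F 0) := by
      have h1 : ystar * I1 ≤ ystar * (Real.sqrt K * F 0) :=
        mul_le_mul_of_nonneg_left hI1 hy.le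
      have h2 : ystar * (Real.sqrt K * F 0) ≤ D * (Real.sqrt K * F 0) :=
        mul_le_mul_of_nonneg_right hD (by positivity)
      linarith
    nlinarith
  · -- Part 2
    set q : ℝ := F ystar - F 0 with hq
    have hq0 : 0 ≤ q := sub_nonneg.2 (hFmono 0 ystar hy.le)
    have hLnonneg : 0 ≤ ∫ x in Set.Ioc 0 ystar, x * (ystar - x) ∂μ :=
      setIntegral_nonneg measurableSet_Ioc
        (fun x hx => mul_nonneg hx.1.le (sub_nonneg.2 hx.2))
    have hqMy : q ≤ M * ystar := by
      have h := hconc 0 ystar le_rfl hy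
      rw [zero_add] at h
      rw [hq]; linarith
    rcases eq_or_lt_of_le hq0 with h0 | hqpos
    · rw [← h0]; simpa using hLnonneg
    · have hM : 0 < M := by
        by_contra h
        push_neg at h
        nlinarith
      set δ : ℝ := q / (3 * M) with hδ
      have hδpos : 0 < δ := div_pos hqpos (by linarith)
      have hMne : M ≠ 0 := ne_of_gt hM
      have hMδ : M * δ = q / 3 := by
        rw [hδ]; field_simp
      have hδy : 3 * δ ≤ ystar := by nlinarith [hM, hqMy, hMδ]
      have hδle : δ ≤ ystar - δ := by linarith
      have h1 : F δ - F 0 ≤ q / 3 := by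
        have := hconc 0 δ le_rfl hδpos
        simpa [hMδ] using this
      have h2 : F ystar - F (ystar - δ) ≤ q / 3 := by
        have := hconc (ystar - δ) δ (by linarith) hδpos
        simpa [hMδ] using this
      have hmass : q / 3 ≤ F (ystar - δ) - F δ := by
        have : q = (F ystar - F (ystar - δ)) + (F (ystar - δ) - F δ) + (F δ - F 0) := by
          rw [hq]; ring
        linarith
      -- integrability of f on Ioc 0 ystar
      have hfcont : Continuous (fun x : ℝ => x * (ystar - x)) :=
        continuous_id.mul (continuous_const.sub continuous_id)
      have hfint : IntegrableOn (fun x : ℝ => x * (ystar - x)) (Set.Ioc 0 ystar) μ := by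
        have : IntegrableOn (fun x : ℝ => x * (ystar - x)) (Set.Icc 0 ystar) μ :=
          hfcont.integrableOn_Icc
        exact this.mono_set Ioc_subset_Icc_self
      have hsub : Set.Ioc δ (ystar - δ) ⊆ Set.Ioc 0 ystar := by
        apply Ioc_subset_Ioc <;> linarith
      have hstep1 : ∫ x in Set.Ioc δ (ystar - δ), x * (ystar - x) ∂μ
          ≤ ∫ x in Set.Ioc 0 ystar, x * (ystar - x) ∂μ := by
        refine setIntegral_mono_set hfint ?_ (HasSubset.Subset.eventuallyLE hsub)
        filter_upwards [ae_restrict_mem measurableSet_Ioc] with x hx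
        exact mul_nonneg hx.1.le (sub_nonneg.2 hx.2)
      have hstep2 : δ ^ 2 * (μ (Set.Ioc δ (ystar - δ))).toReal
          ≤ ∫ x in Set.Ioc δ (ystar - δ), x * (ystar - x) ∂μ := by
        refine le_trans (le_of_eq ?_) (setIntegral_ge_of_const_le (c := δ ^ 2) measurableSet_Ioc (hne _) ?_
          (hfint.mono_set hsub))
        · rw [smul_eq_mul, mul_comm]; rfl
        intro x hx
        have hx1 : δ ≤ x := hx.1.le
        have hx2 : δ ≤ ystar - x := by linarith [hx.2]
        nlinarith [hδpos]
      rw [hIocF δ (ystar - δ) hδle] at hstep2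
      have hfinal : q ^ 3 / (27 * M ^ 2) ≤ δ ^ 2 * (F (ystar - δ) - F δ) := by
        have hδ2 : δ ^ 2 = q ^ 2 / (9 * M ^ 2) := by
          rw [hδ, div_pow]
          congr 1
          ring
        have : q ^ 3 / (27 * M ^ 2) = q ^ 2 / (9 * M ^ 2) * (q / 3) := by
          rw [div_mul_div_comm]
          congr 1 <;> ring
        rw [this, hδ2]
        exact mul_le_mul_of_nonneg_left hmass (by positivity)
      linarith
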